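/- With the same Gibbs measure μ and notation as for the first-order map, the vector field φ₂(q,p) = (0, -½ β (F(q)ᵀM⁻¹p) F(q)) solves ∇*φ₂ = -½ (∇*)² : (φ₁ ⊗ φ₁), where φ₁(q,p) = (0, F(q)). Explicitly, -½ Σ_{i,j} ∂*_{p_i}∂*_{p_j}(F_i(q)F_j(q)) = -½ (β pᵀM⁻¹F(q))² + ½ β F(q)ᵀM⁻¹F(q), and this equals ∇*φ₂ for the given φ₂. -/

import Mathlib

open Real

noncomputable def adjP {d : ℕ} (β : ℝ) (Minv : Matrix (Fin d) (Fin d) ℝ) (i : Fin d)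
    (ψ : (Fin d → ℝ) → (Fin d → ℝ) → ℝ) : (Fin d → ℝ) → (Fin d → ℝ) → ℝ :=
  fun q p => -(fderiv ℝ (fun p' => ψ q p') p (Pi.single i 1)) + β * Minv.mulVec p i * ψ q p

lemma hasF {d : ℕ} (Minv : Matrix (Fin d) (Fin d) ℝ) (j : Fin d) (p : Fin d → ℝ) :
    HasFDerivAt (fun p' : Fin d → ℝ => Minv.mulVec p' j)
      ((ContinuousLinearMap.proj j).comp
        (LinearMap.toContinuousLinearMap (Matrix.mulVecLin Minv))) p :=
  ((ContinuousLinearMap.proj j).comp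
        (LinearMap.toContinuousLinearMap (Matrix.mulVecLin Minv))).hasFDerivAt

lemma mulVec_eq {d : ℕ} (Minv : Matrix (Fin d) (Fin d) ℝ) (v : Fin d → ℝ) (i : Fin d) :
    Minv.mulVec v i = ∑ j, Minv i j * v j := rfl

lemma key1 {d : ℕ} (β : ℝ) (Minv : Matrix (Fin d) (Fin d) ℝ) (F : (Fin d → ℝ) → (Fin d → ℝ))
    (i j : Fin d) (q p : Fin d → ℝ) :
    adjP β Minv i (adjP β Minv j (fun q' _ => F q' i * F q' j)) q p
      = -(β * Minv j i * (F q i * F q j))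
        + β * Minv.mulVec p i * (β * Minv.mulVec p j * (F q i * F q j)) := by
  have h1 : adjP β Minv j (fun q' _ => F q' i * F q' j)
      = fun q p => β * Minv.mulVec p j * (F q i * F q j) := by
    funext q p
    simp [adjP, fderiv_const]
  rw [h1]
  unfold adjP
  have hd : HasFDerivAt (fun p' : Fin d → ℝ => β * Minv.mulVec p' j * (F q i * F q j))
      ((F q i * F q j) • (β • ((ContinuousLinearMap.proj j).comp
        (LinearMap.toContinuousLinearMap (Matrix.mulVecLin Minv))))) p := by
    exact ((hasF Minv j p).const_mul β).mul_const (F q i * F q j)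
  rw [hd.fderiv]
  simp only [ContinuousLinearMap.smul_apply, ContinuousLinearMap.comp_apply,
    ContinuousLinearMap.proj_apply, LinearMap.coe_toContinuousLinearMap',
    Matrix.mulVecLin_apply, Matrix.mulVec_single, Pi.smul_apply, op_smul_eq_mul,
    Matrix.col_apply, mul_one, smul_eq_mul]
  ring

lemma key2 {d : ℕ} (β : ℝ) (Minv : Matrix (Fin d) (Fin d) ℝ) (F : (Fin d → ℝ) → (Fin d → ℝ))
    (i : Fin d) (q p : Fin d → ℝ) :
    adjP β Minv i (fun q' p' => -(1/2) * β * (∑ j, F q' j * Minv.mulVec p' j) * F q' i) q p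
      = -(-(1/2) * β * (∑ j, F q j * Minv j i) * F q i)
        + β * Minv.mulVec p i * (-(1/2) * β * (∑ j, F q j * Minv.mulVec p j) * F q i) := by
  unfold adjP
  have hd : HasFDerivAt (fun p' : Fin d → ℝ => -(1/2) * β * (∑ j, F q j * Minv.mulVec p' j) * F q i)
      ((F q i) • ((-(1/2) * β) • (∑ j, (F q j) • ((ContinuousLinearMap.proj j).comp
        (LinearMap.toContinuousLinearMap (Matrix.mulVecLin Minv)))))) p := by
    have hs : HasFDerivAt (fun p' : Fin d → ℝ => ∑ j, F q j * Minv.mulVec p' j)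
        (∑ j, (F q j) • ((ContinuousLinearMap.proj j).comp
          (LinearMap.toContinuousLinearMap (Matrix.mulVecLin Minv)))) p :=
      HasFDerivAt.fun_sum fun j _ => (hasF Minv j p).const_mul (F q j)
    exact (hs.const_mul (-(1/2) * β)).mul_const (F q i)
  rw [hd.fderiv]
  congr 1
  simp only [ContinuousLinearMap.smul_apply, ContinuousLinearMap.sum_apply,
    ContinuousLinearMap.comp_apply, ContinuousLinearMap.proj_apply,
    LinearMap.coe_toContinuousLinearMap', Matrix.mulVecLin_apply, Matrix.mulVec_single,
    Pi.smul_apply, op_smul_eq_mul, Matrix.col_apply,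
    mul_one, smul_eq_mul, Finset.mul_sum]
  rw [neg_eq_iff_eq_neg]
  ring_nf
  rw [Finset.mul_sum]
  exact Finset.sum_congr rfl fun j _ => by ring

theorem stmt5 {d : ℕ} (β : ℝ) (hβ : 0 < β) (V : (Fin d → ℝ) → ℝ)
    (F : (Fin d → ℝ) → (Fin d → ℝ)) (M Minv : Matrix (Fin d) (Fin d) ℝ)
    (hM : M.PosDef) (hMinv : Minv = M⁻¹)
    (φ2p : (Fin d → ℝ) → (Fin d → ℝ) → (Fin d → ℝ))
    (hφ2p : ∀ q p, φ2p q p = fun i => -(1/2) * β * (∑ j, F q j * Minv.mulVec p j) * F q i) :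
    ∀ q p : Fin d → ℝ,
      (-(1/2) * ∑ i, ∑ j, adjP β Minv i (adjP β Minv j (fun q' _ => F q' i * F q' j)) q p
        = -(1/2) * (β * ∑ i, Minv.mulVec p i * F q i) ^ 2
          + (1/2) * β * ∑ i, F q i * Minv.mulVec (F q) i)
      ∧ (∑ i, adjP β Minv i (fun q' p' => φ2p q' p' i) q p
        = -(1/2) * ∑ i, ∑ j, adjP β Minv i (adjP β Minv j (fun q' _ => F q' i * F q' j)) q p) := by
  have hsym : ∀ i j, Minv j i = Minv i j := by
    intro i j
    have h : Minv.IsHermitian := by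
      rw [hMinv]; exact hM.inv.isHermitian
    simpa using (h.apply j i).symm
  intro q p
  have hdouble : ∑ i, ∑ j, adjP β Minv i (adjP β Minv j (fun q' _ => F q' i * F q' j)) q p
      = (β * ∑ i, Minv.mulVec p i * F q i) * (β * ∑ i, Minv.mulVec p i * F q i)
        - β * ∑ i, F q i * Minv.mulVec (F q) i := by
    simp only [key1]
    have hA : β * ∑ i, Minv.mulVec p i * F q i = ∑ i, β * (Minv.mulVec p i * F q i) :=
      Finset.mul_sum _ _ _
    rw [hA, Finset.sum_mul_sum, Finset.mul_sum, ← Finset.sum_sub_distrib]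
    refine Finset.sum_congr rfl fun i _ => ?_
    have hB : β * (F q i * Minv.mulVec (F q) i)
        = ∑ j, β * (F q i * (Minv i j * F q j)) := by
      rw [mulVec_eq Minv (F q) i, Finset.mul_sum, Finset.mul_sum]
    rw [hB, ← Finset.sum_sub_distrib]
    refine Finset.sum_congr rfl fun j _ => ?_
    rw [hsym i j]
    ring
  constructor
  · rw [hdouble]; ring
  · rw [hdouble]
    simp only [hφ2p]
    simp only [key2]
    have hstep : ∑ i, (-(-(1/2) * β * (∑ j, F q j * Minv j i) * F q i)
          + β * Minv.mulVec p i * (-(1/2) * β * (∑ j, F q j * Minv.mulVec p j) * F q i))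
        = ∑ i, ((1/2) * β * (F q i * Minv.mulVec (F q) i)
          - (1/2) * β ^ 2 * (∑ j, F q j * Minv.mulVec p j) * (Minv.mulVec p i * F q i)) := by
      refine Finset.sum_congr rfl fun i _ => ?_
      rw [mulVec_eq Minv (F q) i]
      have h2 : (∑ j, F q j * Minv j i) = ∑ j, Minv i j * F q j :=
        Finset.sum_congr rfl fun j _ => by rw [hsym i j]; ring
      rw [h2]
      ring
    rw [hstep, Finset.sum_sub_distrib, ← Finset.mul_sum, ← Finset.mul_sum]
    have hT : (∑ j, F q j * Minv.mulVec p j) = ∑ j, Minv.mulVec p j * F q j :=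
      Finset.sum_congr rfl fun j _ => mul_comm _ _
    rw [hT]
    ring
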